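/- Let F : closure(B_ρ) × D → closure(B_ρ) satisfy: for each z ∈ D, F(·,z) is an r-contraction (0 < r < 1), and for each x, F(x,·) is L_F-Lipschitz; let h : closure(B_ρ) → ℝ be L_h-Lipschitz. Then the reservoir functional H* = h ∘ H_F satisfies |H*(u) − H*(v)| ≤ L_h L_F ∑_{k=0}^∞ r^k ‖u_{−k} − v_{−k}‖ for all input sequences u, v ∈ D^{ℤ₋}. -/

import Mathlib

open MeasureTheory Metric

/-- A reservoir functional generated by a state map that is an `r`-contraction
in the state and `L_F`-Lipschitz in the input, composed with an `L_h`-Lipschitz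
readout, is `w`-Lipschitz with `w_{-k} = r^k` and constant `L_h L_F`. -/
theorem stmt14 (n d : ℕ) (ρ r LF Lh : ℝ)
    (hρ : 0 < ρ) (hr0 : 0 < r) (hr1 : r < 1) (hLF : 0 < LF) (hLh : 0 < Lh)
    (D : Set (EuclideanSpace ℝ (Fin d)))
    (F : EuclideanSpace ℝ (Fin n) → EuclideanSpace ℝ (Fin d) → EuclideanSpace ℝ (Fin n))
    (hmap : ∀ x ∈ closedBall (0 : EuclideanSpace ℝ (Fin n)) ρ, ∀ z ∈ D,
      F x z ∈ closedBall (0 : EuclideanSpace ℝ (Fin n)) ρ)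
    (hcontr : ∀ x ∈ closedBall (0 : EuclideanSpace ℝ (Fin n)) ρ,
      ∀ y ∈ closedBall (0 : EuclideanSpace ℝ (Fin n)) ρ, ∀ z ∈ D,
        ‖F x z - F y z‖ ≤ r * ‖x - y‖)
    (hlipF : ∀ x ∈ closedBall (0 : EuclideanSpace ℝ (Fin n)) ρ, ∀ z ∈ D, ∀ z' ∈ D,
        ‖F x z - F x z'‖ ≤ LF * ‖z - z'‖)
    (h : EuclideanSpace ℝ (Fin n) → ℝ)
    (hliph : ∀ x ∈ closedBall (0 : EuclideanSpace ℝ (Fin n)) ρ,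
      ∀ y ∈ closedBall (0 : EuclideanSpace ℝ (Fin n)) ρ, |h x - h y| ≤ Lh * ‖x - y‖)
    (HF : (ℤ → EuclideanSpace ℝ (Fin d)) → EuclideanSpace ℝ (Fin n))
    (hHFball : ∀ z : ℤ → EuclideanSpace ℝ (Fin d), (∀ t, z t ∈ D) →
      HF z ∈ closedBall (0 : EuclideanSpace ℝ (Fin n)) ρ)
    (hHFfix : ∀ z : ℤ → EuclideanSpace ℝ (Fin d), (∀ t, z t ∈ D) →
      HF z = F (HF (fun t => z (t - 1))) (z 0)) :
    ∀ u v : ℤ → EuclideanSpace ℝ (Fin d),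
      (∀ t, u t ∈ D) → (∀ t, v t ∈ D) →
      Summable (fun k : ℕ => r ^ k * ‖u (-(k : ℤ)) - v (-(k : ℤ))‖) →
      |h (HF u) - h (HF v)| ≤ Lh * LF * ∑' k : ℕ, r ^ k * ‖u (-(k : ℤ)) - v (-(k : ℤ))‖ := by

  have key : ∀ N : ℕ, ∀ u v : ℤ → EuclideanSpace ℝ (Fin d),
      (∀ t, u t ∈ D) → (∀ t, v t ∈ D) →
      ‖HF u - HF v‖ ≤ LF * ∑ k ∈ Finset.range N, r ^ k * ‖u (-(k : ℤ)) - v (-(k : ℤ))‖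
        + r ^ N * (2 * ρ) := by
    intro N
    induction N with
    | zero =>
      intro u v hu hv
      simp only [Finset.range_zero, Finset.sum_empty, mul_zero, pow_zero, one_mul, zero_add]
      have h1 : ‖HF u‖ ≤ ρ := by
        have := hHFball u hu; rwa [mem_closedBall_zero_iff] at this
      have h2 : ‖HF v‖ ≤ ρ := by
        have := hHFball v hv; rwa [mem_closedBall_zero_iff] at this
      calc ‖HF u - HF v‖ ≤ ‖HF u‖ + ‖HF v‖ := norm_sub_le _ _
        _ ≤ 2 * ρ := by linarith
    | succ N ih =>
      intro u v hu hv
      set u' : ℤ → EuclideanSpace ℝ (Fin d) := fun t => u (t - 1) with hu'def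
      set v' : ℤ → EuclideanSpace ℝ (Fin d) := fun t => v (t - 1) with hv'def
      have hu' : ∀ t, u' t ∈ D := fun t => hu _
      have hv' : ∀ t, v' t ∈ D := fun t => hv _
      have hbu' := hHFball u' hu'
      have hbv' := hHFball v' hv'
      have h1 : ‖F (HF u') (u 0) - F (HF v') (u 0)‖ ≤ r * ‖HF u' - HF v'‖ :=
        hcontr _ hbu' _ hbv' _ (hu 0)
      have h2 : ‖F (HF v') (u 0) - F (HF v') (v 0)‖ ≤ LF * ‖u 0 - v 0‖ :=
        hlipF _ hbv' _ (hu 0) _ (hv 0)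
      have hIH := ih u' v' hu' hv'
      have hshift : ∀ k : ℕ, r ^ k * ‖u' (-(k : ℤ)) - v' (-(k : ℤ))‖
          = r ^ k * ‖u (-((k + 1 : ℕ) : ℤ)) - v (-((k + 1 : ℕ) : ℤ))‖ := by
        intro k
        have : (-(k : ℤ)) - 1 = -((k + 1 : ℕ) : ℤ) := by push_cast; ring
        simp only [hu'def, hv'def, this]
      rw [Finset.sum_congr rfl (fun k _ => hshift k)] at hIH
      have htri : ‖HF u - HF v‖ ≤ r * ‖HF u' - HF v'‖ + LF * ‖u 0 - v 0‖ := by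
        rw [hHFfix u hu, hHFfix v hv]
        calc ‖F (HF u') (u 0) - F (HF v') (v 0)‖
            ≤ ‖F (HF u') (u 0) - F (HF v') (u 0)‖ + ‖F (HF v') (u 0) - F (HF v') (v 0)‖ := by
              have := norm_sub_le_norm_sub_add_norm_sub (F (HF u') (u 0)) (F (HF v') (u 0))
                (F (HF v') (v 0))
              exact this
          _ ≤ r * ‖HF u' - HF v'‖ + LF * ‖u 0 - v 0‖ := add_le_add h1 h2
      have hsum : LF * ∑ k ∈ Finset.range (N + 1), r ^ k * ‖u (-(k : ℤ)) - v (-(k : ℤ))‖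
          = LF * ‖u 0 - v 0‖
            + r * (LF * ∑ k ∈ Finset.range N,
              r ^ k * ‖u (-((k + 1 : ℕ) : ℤ)) - v (-((k + 1 : ℕ) : ℤ))‖) := by
        rw [Finset.sum_range_succ' (fun k => r ^ k * ‖u (-(k : ℤ)) - v (-(k : ℤ))‖) N]
        push_cast
        simp only [pow_zero, one_mul, neg_zero]
        rw [mul_add, add_comm]
        congr 1
        rw [Finset.mul_sum, Finset.mul_sum, Finset.mul_sum]
        apply Finset.sum_congr rfl
        intro k _
        ring
      rw [hsum]
      have hr' : r * ‖HF u' - HF v'‖ ≤ r * (LF * ∑ k ∈ Finset.range N,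
          r ^ k * ‖u (-((k + 1 : ℕ) : ℤ)) - v (-((k + 1 : ℕ) : ℤ))‖ + r ^ N * (2 * ρ)) :=
        mul_le_mul_of_nonneg_left hIH hr0.le
      calc ‖HF u - HF v‖ ≤ r * ‖HF u' - HF v'‖ + LF * ‖u 0 - v 0‖ := htri
        _ ≤ r * (LF * ∑ k ∈ Finset.range N,
              r ^ k * ‖u (-((k + 1 : ℕ) : ℤ)) - v (-((k + 1 : ℕ) : ℤ))‖ + r ^ N * (2 * ρ))
            + LF * ‖u 0 - v 0‖ := add_le_add_left hr' _
        _ = LF * ‖u 0 - v 0‖ + r * (LF * ∑ k ∈ Finset.range N,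
              r ^ k * ‖u (-((k + 1 : ℕ) : ℤ)) - v (-((k + 1 : ℕ) : ℤ))‖)
            + r ^ (N + 1) * (2 * ρ) := by ring
  intro u v hu hv hsum
  set S := ∑' k : ℕ, r ^ k * ‖u (-(k : ℤ)) - v (-(k : ℤ))‖ with hS
  have hnorm : ‖HF u - HF v‖ ≤ LF * S := by
    have hlim : Filter.Tendsto
        (fun N => LF * ∑ k ∈ Finset.range N, r ^ k * ‖u (-(k : ℤ)) - v (-(k : ℤ))‖
          + r ^ N * (2 * ρ)) Filter.atTop (nhds (LF * S + 0)) := by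
      apply Filter.Tendsto.add
      · exact (hsum.hasSum.tendsto_sum_nat).const_mul LF
      · have := tendsto_pow_atTop_nhds_zero_of_lt_one hr0.le hr1
        simpa using this.mul_const (2 * ρ)
    rw [add_zero] at hlim
    exact ge_of_tendsto hlim (Filter.Eventually.of_forall (fun N => key N u v hu hv))
  have hSnn : 0 ≤ S := tsum_nonneg (fun k => by positivity)
  have hb1 : |h (HF u) - h (HF v)| ≤ Lh * ‖HF u - HF v‖ :=
    hliph _ (hHFball u hu) _ (hHFball v hv)
  calc |h (HF u) - h (HF v)| ≤ Lh * ‖HF u - HF v‖ := hb1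
    _ ≤ Lh * (LF * S) := mul_le_mul_of_nonneg_left hnorm hLh.le
    _ = Lh * LF * S := by ring
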